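/- Decomposition of the entropy increment for the CPIC method: work in phase space ℝ^{d_x} × ℝ^{d_v} with separable even C¹ kernel K(x,v) = ψ(x)φ(v) (ψ, φ even, nonnegative, C¹), weights w_p ≥ 0, and differentiable trajectories (x_p(t), v_p(t)) satisfying ẋ_p = v_p and v̇_p = F_p − U_p, where F_p ∈ ℝ^{d_v} is arbitrary (the Lorentz force at particle p) and U_p = Σ_q w_q ψ(x_p − x_q) A(v_p − v_q)(G_p − G_q) with G_p = (Σ_q w_q ψ(x_p − x_q)∇φ(v_p − v_q))/f̃_p + Σ_q w_q ψ(x_p − x_q)∇φ(v_p − v_q)/f̃_q and f̃_p = Σ_q w_q ψ(x_p − x_q)φ(v_p − v_q) > 0. Then the regularised entropy S(t) = −Σ_p w_p log f̃_p satisfies dS/dt = C_x + C_v + D, where C_x = −Σ_p w_p H_p · v_p with H_p = (Σ_q w_q ∇ψ(x_p − x_q)φ(v_p − v_q))/f̃_p + Σ_q w_q ∇ψ(x_p − x_q)φ(v_p − v_q)/f̃_q, C_v = −Σ_p w_p G_p · F_p, and D = Σ_p w_p G_p · U_p = (1/2)Σ_{p,q} w_p w_q ψ(x_p − x_q)(G_p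 − G_q)·A(v_p − v_q)(G_p − G_q) ≥ 0. -/

import Mathlib

open Matrix
open scoped Classical

/-- The Landau collision kernel `A(z) = C ‖z‖^(γ+2) (I − z zᵀ/‖z‖²)` for `z ≠ 0`,
with the convention `A(0) = 0`. -/
noncomputable def landauA (d : ℕ) (C γ : ℝ) (z : Fin d → ℝ) :
    Matrix (Fin d) (Fin d) ℝ :=
  if z = 0 then 0
  else (C * Real.sqrt (z ⬝ᵥ z) ^ (γ + 2)) •
    (1 - (z ⬝ᵥ z)⁻¹ • Matrix.vecMulVec z z)

/-- The gradient of a function `f : ℝ^n → ℝ`, with coordinates given by the partial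
derivatives of `f`. -/
noncomputable def pgrad {n : ℕ} (f : (Fin n → ℝ) → ℝ) (y : Fin n → ℝ) : Fin n → ℝ :=
  fun i => fderiv ℝ f y (Pi.single i 1)

/- ### Auxiliary lemmas -/

lemma landauA_neg (d : ℕ) (C γ : ℝ) (z : Fin d → ℝ) :
    landauA d C γ (-z) = landauA d C γ z := by
  unfold landauA
  have h1 : (-z) ⬝ᵥ (-z) = z ⬝ᵥ z := by simp
  have h2 : Matrix.vecMulVec (-z) (-z) = Matrix.vecMulVec z z := by
    ext i j; simp [Matrix.vecMulVec_apply]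
  by_cases h : z = 0
  · simp [h]
  · rw [if_neg h, if_neg (by simpa using h), h1, h2]

lemma dotProduct_self_pos {d : ℕ} {z : Fin d → ℝ} (hz : z ≠ 0) : 0 < z ⬝ᵥ z := by
  have h0 : 0 ≤ z ⬝ᵥ z := Finset.sum_nonneg fun i _ => mul_self_nonneg _
  rcases h0.lt_or_eq with h | h
  · exact h
  · exfalso
    apply hz
    funext i
    have := Finset.sum_eq_zero_iff_of_nonneg (fun i _ => mul_self_nonneg (z i)) |>.1 h.symm i
      (Finset.mem_univ i)
    have : z i = 0 := by nlinarith [this]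
    simpa using this

lemma landauA_psd {d : ℕ} {C : ℝ} (γ : ℝ) (hC : 0 < C) (z u : Fin d → ℝ) :
    0 ≤ u ⬝ᵥ (landauA d C γ z).mulVec u := by
  unfold landauA
  by_cases hz : z = 0
  · simp [hz]
  · simp only [if_neg hz]
    have hzz : 0 < z ⬝ᵥ z := dotProduct_self_pos hz
    have hvv : (Matrix.vecMulVec z z).mulVec u = (z ⬝ᵥ u) • z := by
      funext i
      simp only [Matrix.mulVec, Matrix.vecMulVec_apply, dotProduct, Pi.smul_apply, smul_eq_mul]
      rw [Finset.sum_mul]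
      exact Finset.sum_congr rfl fun j _ => by ring
    rw [Matrix.smul_mulVec, Matrix.sub_mulVec, Matrix.one_mulVec,
      Matrix.smul_mulVec, hvv]
    rw [dotProduct_smul, dotProduct_sub, dotProduct_smul,
      dotProduct_smul]
    have hc : 0 ≤ C * Real.sqrt (z ⬝ᵥ z) ^ (γ + 2) :=
      mul_nonneg hC.le (Real.rpow_nonneg (Real.sqrt_nonneg _) _)
    apply mul_nonneg hc
    have hcs : (u ⬝ᵥ z) ^ 2 ≤ (u ⬝ᵥ u) * (z ⬝ᵥ z) := by
      have := Finset.sum_mul_sq_le_sq_mul_sq Finset.univ u z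
      simpa [dotProduct, pow_two, mul_assoc] using this
    have huz : u ⬝ᵥ z = z ⬝ᵥ u := by rw [dotProduct_comm]
    have : (z ⬝ᵥ z)⁻¹ * ((z ⬝ᵥ u) * (u ⬝ᵥ z)) ≤ u ⬝ᵥ u := by
      rw [← huz, inv_mul_le_iff₀ hzz]
      nlinarith [hcs]
    simp only [smul_eq_mul]
    linarith

lemma fderiv_apply_eq_pgrad_dot {n : ℕ} (f : (Fin n → ℝ) → ℝ) (y u : Fin n → ℝ) :
    fderiv ℝ f y u = pgrad f y ⬝ᵥ u := by
  conv_lhs => rw [← Finset.univ_sum_single u]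
  rw [map_sum]
  unfold pgrad dotProduct
  refine Finset.sum_congr rfl fun i _ => ?_
  have : Pi.single i (u i) = u i • (Pi.single i (1:ℝ) : Fin n → ℝ) := by
    funext j
    by_cases h : j = i
    · subst h; simp
    · simp [Pi.single_apply, h]
  rw [this, (fderiv ℝ f y).map_smul, smul_eq_mul, mul_comm]

lemma pgrad_neg_of_even {n : ℕ} {f : (Fin n → ℝ) → ℝ} (hf : Differentiable ℝ f)
    (hfe : ∀ y, f (-y) = f y) (y : Fin n → ℝ) : pgrad f (-y) = -pgrad f y := by
  have hfun : (fun z : Fin n → ℝ => f (-z)) = f := funext hfe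
  have hneg : HasFDerivAt (fun z : Fin n → ℝ => -z)
      (-(ContinuousLinearMap.id ℝ (Fin n → ℝ))) y := (hasFDerivAt_id y).neg
  have hcomp : HasFDerivAt (fun z : Fin n → ℝ => f (-z))
      ((fderiv ℝ f (-y)).comp (-(ContinuousLinearMap.id ℝ (Fin n → ℝ)))) y :=
    ((hf (-y)).hasFDerivAt).comp y hneg
  rw [hfun] at hcomp
  have hfd : fderiv ℝ f y = (fderiv ℝ f (-y)).comp (-(ContinuousLinearMap.id ℝ (Fin n → ℝ))) :=
    hcomp.fderiv
  funext i
  have : fderiv ℝ f y (Pi.single i 1) = - fderiv ℝ f (-y) (Pi.single i 1) := by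
    rw [hfd]; simp
  simp only [pgrad, Pi.neg_apply]
  linarith [this]

lemma sum_dotProduct' {d N : ℕ} (f : Fin N → Fin d → ℝ) (u : Fin d → ℝ) :
    (∑ i, f i) ⬝ᵥ u = ∑ i, f i ⬝ᵥ u := by
  simp only [dotProduct, Finset.sum_apply, Finset.sum_mul]
  exact Finset.sum_comm

lemma dotProduct_sum' {d N : ℕ} (u : Fin d → ℝ) (f : Fin N → Fin d → ℝ) :
    u ⬝ᵥ (∑ i, f i) = ∑ i, u ⬝ᵥ f i := by
  simp only [dotProduct, Finset.sum_apply, Finset.mul_sum]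
  exact Finset.sum_comm

lemma mulVec_neg' {d : ℕ} (A : Matrix (Fin d) (Fin d) ℝ) (x : Fin d → ℝ) :
    A *ᵥ (-x) = -(A *ᵥ x) := by
  funext i; simp [Matrix.mulVec, dotProduct]

lemma double_sum_antisymm {N : ℕ} (f : Fin N → Fin N → ℝ)
    (h : ∀ p q, f q p = -f p q) : ∑ p : Fin N, ∑ q : Fin N, f p q = 0 := by
  have h1 : ∑ p : Fin N, ∑ q : Fin N, f p q = ∑ p : Fin N, ∑ q : Fin N, f q p :=
    Finset.sum_comm
  have h2 : ∑ p : Fin N, ∑ q : Fin N, f q p = ∑ p : Fin N, ∑ q : Fin N, -f p q :=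
    Finset.sum_congr rfl fun p _ => Finset.sum_congr rfl fun q _ => h p q
  rw [h2] at h1
  simp only [Finset.sum_neg_distrib] at h1
  linarith

lemma double_sum_eq_of_antisymm {N : ℕ} (f g : Fin N → Fin N → ℝ)
    (h : ∀ p q, f p q - g p q = -(f q p - g q p)) :
    ∑ p : Fin N, ∑ q : Fin N, f p q = ∑ p : Fin N, ∑ q : Fin N, g p q := by
  have h0 : ∑ p : Fin N, ∑ q : Fin N, (f p q - g p q) = 0 :=
    double_sum_antisymm _ (fun p q => by linarith [h p q])
  have h1 : ∑ p : Fin N, ∑ q : Fin N, (f p q - g p q)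
      = (∑ p : Fin N, ∑ q : Fin N, f p q) - ∑ p : Fin N, ∑ q : Fin N, g p q := by
    simp [Finset.sum_sub_distrib]
  linarith

lemma mul_inv_sum_add_sum {N : ℕ} (c i : ℝ) (A B : Fin N → ℝ) :
    c * (i * ∑ q, A q + ∑ q, B q) = ∑ q, c * (i * A q + B q) := by
  simp only [mul_add, Finset.mul_sum, ← Finset.sum_add_distrib]

theorem cpic_entropy_decomposition {d N : ℕ} (C γ : ℝ) (hC : 0 < C)
    (ψ : (Fin d → ℝ) → ℝ) (hψe : ∀ y, ψ (-y) = ψ y) (hψ0 : ∀ y, 0 ≤ ψ y)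
    (hψC : ContDiff ℝ 1 ψ)
    (φ : (Fin d → ℝ) → ℝ) (hφe : ∀ y, φ (-y) = φ y) (hφ0 : ∀ y, 0 ≤ φ y)
    (hφC : ContDiff ℝ 1 φ)
    (w : Fin N → ℝ) (hw : ∀ p, 0 ≤ w p)
    (x : Fin N → ℝ → Fin d → ℝ) (v : Fin N → ℝ → Fin d → ℝ)
    (F : Fin N → ℝ → Fin d → ℝ)
    (ft : Fin N → ℝ → ℝ)
    (hft : ∀ p t, ft p t =
      ∑ q : Fin N, w q * (ψ (x p t - x q t) * φ (v p t - v q t)))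
    (hft0 : ∀ p t, 0 < ft p t)
    (G : Fin N → ℝ → Fin d → ℝ)
    (hG : ∀ p t, G p t =
      (ft p t)⁻¹ • (∑ q : Fin N, (w q * ψ (x p t - x q t)) • pgrad φ (v p t - v q t)) +
      ∑ q : Fin N, (w q * ψ (x p t - x q t) / ft q t) • pgrad φ (v p t - v q t))
    (H : Fin N → ℝ → Fin d → ℝ)
    (hH : ∀ p t, H p t =
      (ft p t)⁻¹ • (∑ q : Fin N, (w q * φ (v p t - v q t)) • pgrad ψ (x p t - x q t)) +
      ∑ q : Fin N, (w q * φ (v p t - v q t) / ft q t) • pgrad ψ (x p t - x q t))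
    (U : Fin N → ℝ → Fin d → ℝ)
    (hU : ∀ p t, U p t = ∑ q : Fin N,
      (w q * ψ (x p t - x q t)) •
        (landauA d C γ (v p t - v q t)).mulVec (G p t - G q t))
    (hx : ∀ p t, HasDerivAt (x p) (v p t) t)
    (hv : ∀ p t, HasDerivAt (v p) (F p t - U p t) t)
    (t : ℝ) :
    HasDerivAt (fun s => -∑ p : Fin N, w p * Real.log (ft p s))
      ((-∑ p : Fin N, w p * (H p t ⬝ᵥ v p t)) +
       (-∑ p : Fin N, w p * (G p t ⬝ᵥ F p t)) +
       (∑ p : Fin N, w p * (G p t ⬝ᵥ U p t))) t ∧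
    (∑ p : Fin N, w p * (G p t ⬝ᵥ U p t))
      = (1 / 2) * ∑ p : Fin N, ∑ q : Fin N,
        w p * w q * ψ (x p t - x q t) *
          ((G p t - G q t) ⬝ᵥ
            (landauA d C γ (v p t - v q t)).mulVec (G p t - G q t)) ∧
    0 ≤ ∑ p : Fin N, w p * (G p t ⬝ᵥ U p t) := by
  have hψd : Differentiable ℝ ψ := hψC.differentiable one_ne_zero
  have hφd : Differentiable ℝ φ := hφC.differentiable one_ne_zero
  -- symmetry facts at time t
  have hsψ : ∀ p q : Fin N, ψ (x q t - x p t) = ψ (x p t - x q t) := fun p q => by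
    rw [← neg_sub (x p t) (x q t), hψe]
  have hsφ : ∀ p q : Fin N, φ (v q t - v p t) = φ (v p t - v q t) := fun p q => by
    rw [← neg_sub (v p t) (v q t), hφe]
  have hPψ : ∀ p q : Fin N, pgrad ψ (x q t - x p t) = -pgrad ψ (x p t - x q t) := fun p q => by
    rw [← neg_sub (x p t) (x q t)]; exact pgrad_neg_of_even hψd hψe _
  have hPφ : ∀ p q : Fin N, pgrad φ (v q t - v p t) = -pgrad φ (v p t - v q t) := fun p q => by
    rw [← neg_sub (v p t) (v q t)]; exact pgrad_neg_of_even hφd hφe _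
  have hAsym : ∀ p q : Fin N,
      landauA d C γ (v q t - v p t) = landauA d C γ (v p t - v q t) := fun p q => by
    rw [← neg_sub (v p t) (v q t)]; exact landauA_neg _ _ _ _
  -- the per-(p,q) derivative
  have hterm : ∀ p q : Fin N, HasDerivAt
      (fun s => w q * (ψ (x p s - x q s) * φ (v p s - v q s)))
      (w q * ((pgrad ψ (x p t - x q t) ⬝ᵥ (v p t - v q t)) * φ (v p t - v q t) +
        ψ (x p t - x q t) *
          (pgrad φ (v p t - v q t) ⬝ᵥ (F p t - U p t - (F q t - U q t))))) t := by
    intro p q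
    have hxd : HasDerivAt (fun s => x p s - x q s) (v p t - v q t) t := (hx p t).sub (hx q t)
    have hvd : HasDerivAt (fun s => v p s - v q s) (F p t - U p t - (F q t - U q t)) t :=
      (hv p t).sub (hv q t)
    have h1 : HasDerivAt (fun s => ψ (x p s - x q s))
        (pgrad ψ (x p t - x q t) ⬝ᵥ (v p t - v q t)) t := by
      have h := (hψd (x p t - x q t)).hasFDerivAt.comp_hasDerivAt t hxd
      rw [fderiv_apply_eq_pgrad_dot] at h
      exact h
    have h2 : HasDerivAt (fun s => φ (v p s - v q s))
        (pgrad φ (v p t - v q t) ⬝ᵥ (F p t - U p t - (F q t - U q t))) t := by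
      have h := (hφd (v p t - v q t)).hasFDerivAt.comp_hasDerivAt t hvd
      rw [fderiv_apply_eq_pgrad_dot] at h
      exact h
    exact (h1.mul h2).const_mul (w q)
  -- derivative of ft p
  have hftd : ∀ p : Fin N, HasDerivAt (fun s => ft p s)
      (∑ q : Fin N,
        w q * ((pgrad ψ (x p t - x q t) ⬝ᵥ (v p t - v q t)) * φ (v p t - v q t) +
          ψ (x p t - x q t) *
            (pgrad φ (v p t - v q t) ⬝ᵥ (F p t - U p t - (F q t - U q t))))) t := by
    intro p
    have hsum := HasDerivAt.sum (fun q (_ : q ∈ Finset.univ) => hterm p q)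
    exact hsum.congr_of_eventuallyEq (Filter.Eventually.of_forall fun s => by
      simp only [Finset.sum_apply]; exact hft p s)
  -- derivative of S
  have hStot : HasDerivAt (fun s => -∑ p : Fin N, w p * Real.log (ft p s))
      (-∑ p : Fin N, w p *
        ((∑ q : Fin N,
          w q * ((pgrad ψ (x p t - x q t) ⬝ᵥ (v p t - v q t)) * φ (v p t - v q t) +
            ψ (x p t - x q t) *
              (pgrad φ (v p t - v q t) ⬝ᵥ (F p t - U p t - (F q t - U q t))))) / ft p t)) t := by
    exact (HasDerivAt.sum (fun p (_ : p ∈ Finset.univ) =>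
      ((hftd p).log (ne_of_gt (hft0 p t))).const_mul (w p))).neg.congr_of_eventuallyEq
      (Filter.Eventually.of_forall fun s => by simp only [Pi.neg_apply, Finset.sum_apply])
  -- expansion of the dot products appearing in the statement
  have hHdot : ∀ p : Fin N, H p t ⬝ᵥ v p t =
      (ft p t)⁻¹ * (∑ q : Fin N,
        (w q * φ (v p t - v q t)) * (pgrad ψ (x p t - x q t) ⬝ᵥ v p t)) +
      ∑ q : Fin N,
        (w q * φ (v p t - v q t) / ft q t) * (pgrad ψ (x p t - x q t) ⬝ᵥ v p t) := by
    intro p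
    rw [hH p t, add_dotProduct, smul_dotProduct, sum_dotProduct',
      sum_dotProduct']
    simp only [smul_dotProduct, smul_eq_mul]
  have hGFU : ∀ p : Fin N, G p t ⬝ᵥ (F p t - U p t) =
      (ft p t)⁻¹ * (∑ q : Fin N,
        (w q * ψ (x p t - x q t)) * (pgrad φ (v p t - v q t) ⬝ᵥ (F p t - U p t))) +
      ∑ q : Fin N,
        (w q * ψ (x p t - x q t) / ft q t) * (pgrad φ (v p t - v q t) ⬝ᵥ (F p t - U p t)) := by
    intro p
    rw [hG p t, add_dotProduct, smul_dotProduct, sum_dotProduct',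
      sum_dotProduct']
    simp only [smul_dotProduct, smul_eq_mul]
  have hGU : ∀ p : Fin N, G p t ⬝ᵥ U p t =
      ∑ q : Fin N, (w q * ψ (x p t - x q t)) *
        (G p t ⬝ᵥ (landauA d C γ (v p t - v q t)) *ᵥ (G p t - G q t)) := by
    intro p
    rw [hU p t, dotProduct_sum']
    simp only [dotProduct_smul, smul_eq_mul]
  -- Part 2: the symmetrised form of D
  have hKey : ∀ p q : Fin N,
      (G p t - G q t) ⬝ᵥ (landauA d C γ (v p t - v q t)) *ᵥ (G p t - G q t)
      = (G p t ⬝ᵥ (landauA d C γ (v p t - v q t)) *ᵥ (G p t - G q t))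
        + (G q t ⬝ᵥ (landauA d C γ (v q t - v p t)) *ᵥ (G q t - G p t)) := by
    intro p q
    rw [hAsym p q, show G q t - G p t = -(G p t - G q t) from (neg_sub _ _).symm,
      mulVec_neg', dotProduct_neg, sub_dotProduct]
    ring
  have hKsym : ∀ p q : Fin N,
      (G q t - G p t) ⬝ᵥ (landauA d C γ (v q t - v p t)) *ᵥ (G q t - G p t)
      = (G p t - G q t) ⬝ᵥ (landauA d C γ (v p t - v q t)) *ᵥ (G p t - G q t) := by
    intro p q
    rw [hAsym p q, show G q t - G p t = -(G p t - G q t) from (neg_sub _ _).symm,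
      mulVec_neg', dotProduct_neg, neg_dotProduct, neg_neg]
  have hD : (∑ p : Fin N, w p * (G p t ⬝ᵥ U p t))
      = (1 / 2) * ∑ p : Fin N, ∑ q : Fin N,
        w p * w q * ψ (x p t - x q t) *
          ((G p t - G q t) ⬝ᵥ
            (landauA d C γ (v p t - v q t)).mulVec (G p t - G q t)) := by
    calc ∑ p : Fin N, w p * (G p t ⬝ᵥ U p t)
        = ∑ p : Fin N, ∑ q : Fin N, w p * ((w q * ψ (x p t - x q t)) *
            (G p t ⬝ᵥ (landauA d C γ (v p t - v q t)) *ᵥ (G p t - G q t))) := by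
          refine Finset.sum_congr rfl fun p _ => ?_
          rw [hGU p, Finset.mul_sum]
      _ = ∑ p : Fin N, ∑ q : Fin N, (1/2) * (w p * w q * ψ (x p t - x q t) *
            ((G p t - G q t) ⬝ᵥ
              (landauA d C γ (v p t - v q t)).mulVec (G p t - G q t))) := by
          refine double_sum_eq_of_antisymm _ _ fun p q => ?_
          rw [hKey p q, hKey q p, hsψ p q]
          ring
      _ = (1 / 2) * ∑ p : Fin N, ∑ q : Fin N,
            w p * w q * ψ (x p t - x q t) *
              ((G p t - G q t) ⬝ᵥ
                (landauA d C γ (v p t - v q t)).mulVec (G p t - G q t)) := by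
          rw [Finset.mul_sum]
          exact Finset.sum_congr rfl fun p _ => (Finset.mul_sum _ _ _).symm
  -- Part 1: value of the derivative
  have hval : (-∑ p : Fin N, w p *
        ((∑ q : Fin N,
          w q * ((pgrad ψ (x p t - x q t) ⬝ᵥ (v p t - v q t)) * φ (v p t - v q t) +
            ψ (x p t - x q t) *
              (pgrad φ (v p t - v q t) ⬝ᵥ (F p t - U p t - (F q t - U q t))))) / ft p t))
      = (-∑ p : Fin N, w p * (H p t ⬝ᵥ v p t)) +
        (-∑ p : Fin N, w p * (G p t ⬝ᵥ F p t)) +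
        (∑ p : Fin N, w p * (G p t ⬝ᵥ U p t)) := by
    have step2 : ∑ p : Fin N, w p *
        ((∑ q : Fin N,
          w q * ((pgrad ψ (x p t - x q t) ⬝ᵥ (v p t - v q t)) * φ (v p t - v q t) +
            ψ (x p t - x q t) *
              (pgrad φ (v p t - v q t) ⬝ᵥ (F p t - U p t - (F q t - U q t))))) / ft p t)
        = ∑ p : Fin N,
            (w p * (H p t ⬝ᵥ v p t) + w p * (G p t ⬝ᵥ (F p t - U p t))) := by
      calc ∑ p : Fin N, w p *
            ((∑ q : Fin N,
              w q * ((pgrad ψ (x p t - x q t) ⬝ᵥ (v p t - v q t)) * φ (v p t - v q t) +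
                ψ (x p t - x q t) *
                  (pgrad φ (v p t - v q t) ⬝ᵥ (F p t - U p t - (F q t - U q t))))) / ft p t)
          = ∑ p : Fin N, ∑ q : Fin N, w p *
              ((w q * ((pgrad ψ (x p t - x q t) ⬝ᵥ (v p t - v q t)) * φ (v p t - v q t) +
                ψ (x p t - x q t) *
                  (pgrad φ (v p t - v q t) ⬝ᵥ (F p t - U p t - (F q t - U q t))))) / ft p t) := by
            refine Finset.sum_congr rfl fun p _ => ?_
            rw [Finset.sum_div, Finset.mul_sum]
        _ = ∑ p : Fin N, ∑ q : Fin N,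
              (w p * ((ft p t)⁻¹ *
                  ((w q * φ (v p t - v q t)) * (pgrad ψ (x p t - x q t) ⬝ᵥ v p t)) +
                (w q * φ (v p t - v q t) / ft q t) * (pgrad ψ (x p t - x q t) ⬝ᵥ v p t)) +
               w p * ((ft p t)⁻¹ *
                  ((w q * ψ (x p t - x q t)) *
                    (pgrad φ (v p t - v q t) ⬝ᵥ (F p t - U p t))) +
                (w q * ψ (x p t - x q t) / ft q t) *
                  (pgrad φ (v p t - v q t) ⬝ᵥ (F p t - U p t)))) := by
            refine double_sum_eq_of_antisymm _ _ fun p q => ?_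
            have hfp : ft p t ≠ 0 := (hft0 p t).ne'
            have hfq : ft q t ≠ 0 := (hft0 q t).ne'
            rw [hsψ p q, hsφ p q, hPψ p q, hPφ p q]
            simp only [dotProduct_sub, neg_dotProduct]
            field_simp
            ring
        _ = ∑ p : Fin N,
              (w p * (H p t ⬝ᵥ v p t) + w p * (G p t ⬝ᵥ (F p t - U p t))) := by
            refine Finset.sum_congr rfl fun p _ => ?_
            rw [hHdot p, hGFU p, mul_inv_sum_add_sum, mul_inv_sum_add_sum,
              ← Finset.sum_add_distrib]
    rw [step2]
    have : ∀ p : Fin N, w p * (G p t ⬝ᵥ (F p t - U p t))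
        = w p * (G p t ⬝ᵥ F p t) - w p * (G p t ⬝ᵥ U p t) := fun p => by
      rw [dotProduct_sub]; ring
    simp only [this]
    rw [Finset.sum_add_distrib, Finset.sum_sub_distrib]
    ring
  refine ⟨?_, hD, ?_⟩
  · rw [← hval]
    exact hStot
  · rw [hD]
    apply mul_nonneg (by norm_num)
    refine Finset.sum_nonneg fun p _ => Finset.sum_nonneg fun q _ => ?_
    exact mul_nonneg (mul_nonneg (mul_nonneg (hw p) (hw q)) (hψ0 _))
      (landauA_psd γ hC _ _)
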